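/- For every integer M ≥ 1 and for ρ-almost every pair (x,x') ∈ X × X, for every N ∈ ℕ there exists n > N with D_n(x,x') ∈ {0, M}; in particular, the stopping time τ = inf{n > σ : D_n ∈ {0,M}} is finite ρ-almost everywhere for any almost-everywhere-finite stopping time σ. -/

import Mathlib

open MeasureTheory Filter
open scoped ENNReal

/-- The Euler path space: a point is an infinite edge path in the Euler graph,
`x n : Fin (n+2)` being the label of the edge chosen from level `n` to level `n+1`. -/
abbrev EulerPath : Type := ∀ n : ℕ, Fin (n + 2)

/-- Vertex labels: `kv x n` is the `k` with the path `x` passing through vertex `(n,k)`.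
A label `(x n : ℕ) ≤ kv x n` is a left turn (edge to `(n+1, kv x n)`), a larger label
is a right turn (edge to `(n+1, kv x n + 1)`). -/
def kv (x : EulerPath) : ℕ → ℕ
  | 0 => 0
  | n + 1 => if (x n : ℕ) ≤ kv x n then kv x n else kv x n + 1

/-- The symmetric measure: the product over `n` of the uniform probability measures on
`Fin (n+2)`, characterized as the probability measure giving each cylinder of length `n`
the measure `∏_{i<n} 1/(i+2)`. -/
def IsSymmetricMeasure (η : Measure EulerPath) : Prop :=
  IsProbabilityMeasure η ∧
    ∀ (n : ℕ) (c : EulerPath),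
      η {x | ∀ i < n, x i = c i} = ∏ i ∈ Finset.range n, ((i : ℝ≥0∞) + 2)⁻¹

/-- The vertex distance `D_n(x,x') = |k_n(x) - k_n(x')|` as an integer. -/
def D (n : ℕ) (p : EulerPath × EulerPath) : ℤ :=
  |(kv p.1 n : ℤ) - (kv p.2 n : ℤ)|

lemma kv_le (x : EulerPath) : ∀ n, kv x n ≤ n
  | 0 => le_refl 0
  | n + 1 => by
      have := kv_le x n
      rw [kv]; split <;> omega

lemma kv_congr {x y : EulerPath} : ∀ {n : ℕ}, (∀ i < n, x i = y i) → kv x n = kv y n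
  | 0, _ => rfl
  | n + 1, h => by
      have ih := kv_congr (x := x) (y := y) (n := n) (fun i hi => h i (hi.trans (Nat.lt_succ_self n)))
      rw [kv, kv, ih, h n (Nat.lt_succ_self n)]

abbrev Pre (n : ℕ) : Type := ∀ i : Fin n, Fin (i.1 + 2)

def extp {n : ℕ} (c : Pre n) : EulerPath := fun i => if h : i < n then c ⟨i, h⟩ else 0

def cyl {n : ℕ} (c : Pre n) : Set EulerPath := {x | ∀ i < n, x i = extp c i}

def res (n : ℕ) (x : EulerPath) : Pre n := fun i => x i.1

lemma mem_cyl_res (n : ℕ) (x : EulerPath) : x ∈ cyl (res n x) := by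
  intro i hi
  simp [extp, hi, res]

lemma measurableSet_cyl {n : ℕ} (c : Pre n) : MeasurableSet (cyl c) := by
  have : cyl c = ⋂ j : Fin n, (fun x : EulerPath => x j.1) ⁻¹' {extp c j.1} := by
    ext x
    constructor
    · intro h
      exact Set.mem_iInter.mpr fun j => h j.1 j.2
    · intro h i hi; exact Set.mem_iInter.mp h ⟨i, hi⟩
  rw [this]
  exact MeasurableSet.iInter fun j =>
    (measurable_pi_apply (j.1 : ℕ)) (MeasurableSet.singleton _)

lemma kv_extp_res {n m : ℕ} (hm : m ≤ n) (x : EulerPath) :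
    kv (extp (res n x)) m = kv x m := by
  refine kv_congr fun i hi => ?_
  simp [extp, res, lt_of_lt_of_le hi hm]

/-- append one symbol -/
def snoc2 {n : ℕ} (c : Pre n) (t : Fin (n + 2)) : Pre (n + 1) :=
  (Fin.snocEquiv (fun i : Fin (n+1) => Fin (i.1 + 2))) (t, c)

lemma extp_snoc2_lt {n : ℕ} (c : Pre n) (t : Fin (n + 2)) {i : ℕ} (hi : i < n) :
    extp (snoc2 c t) i = extp c i := by
  have h1 : i < n + 1 := hi.trans (Nat.lt_succ_self n)
  simp only [extp, dif_pos hi, dif_pos h1, snoc2, Fin.snocEquiv_apply]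
  simp [Fin.snoc, hi]

lemma extp_snoc2_last {n : ℕ} (c : Pre n) (t : Fin (n + 2)) :
    extp (snoc2 c t) n = t := by
  simp only [extp, dif_pos (Nat.lt_succ_self n), snoc2, Fin.snocEquiv_apply]
  simp [Fin.snoc]

lemma kv_extp_snoc2 {n m : ℕ} (hm : m ≤ n) (c : Pre n) (t : Fin (n + 2)) :
    kv (extp (snoc2 c t)) m = kv (extp c) m :=
  kv_congr fun i hi => extp_snoc2_lt c t (lt_of_lt_of_le hi hm)

lemma kv_extp_snoc2_succ {n : ℕ} (c : Pre n) (t : Fin (n + 2)) :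
    kv (extp (snoc2 c t)) (n + 1) =
      if (t : ℕ) ≤ kv (extp c) n then kv (extp c) n else kv (extp c) n + 1 := by
  rw [kv, kv_extp_snoc2 (le_refl n), extp_snoc2_last]

/-- one-step vertex move as a function of the label -/
def stp (k : ℕ) (t : ℕ) : ℕ := if t ≤ k then k else k + 1

lemma count_gt (m k : ℕ) :
    ∑ i ∈ Finset.range m, (if k < i then (1:ℤ) else 0) = ((m - (k+1) : ℕ) : ℤ) := by
  induction m with
  | zero => simp
  | succ m ih =>
      rw [Finset.sum_range_succ, ih]
      split <;> omega

lemma sum_stp (n k : ℕ) (hk : k ≤ n + 1) :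
    ∑ t : Fin (n + 2), (stp k (t : ℕ) : ℤ) = (n + 2) * k + (n + 1) - k := by
  have h1 : ∀ t : Fin (n + 2), (stp k (t : ℕ) : ℤ) = k + (if k < (t : ℕ) then (1:ℤ) else 0) := by
    intro t
    unfold stp
    rcases le_or_gt (t : ℕ) k with h | h
    · simp [h, Nat.not_lt.mpr h]
    · simp [h, Nat.not_le.mpr h]
  rw [Finset.sum_congr rfl (fun t _ => h1 t), Finset.sum_add_distrib]
  rw [Fin.sum_univ_eq_sum_range (fun i => if k < i then (1:ℤ) else 0) (n+2), count_gt]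
  simp only [Finset.sum_const, Finset.card_univ, Fintype.card_fin, nsmul_eq_mul]
  push_cast
  omega

lemma sum_natAbs_step (n k k' : ℕ) (hk : k ≤ n + 1) (hk' : k' ≤ n + 1) (hlt : k' < k) :
    ∑ t : Fin (n + 2), ∑ t' : Fin (n + 2),
        ((stp k (t : ℕ) : ℤ) - (stp k' (t' : ℕ) : ℤ)).natAbs
      = (n + 2) * (n + 1) * (k - k') := by
  have key : ∀ t t' : Fin (n + 2),
      (((stp k (t : ℕ) : ℤ) - (stp k' (t' : ℕ) : ℤ)).natAbs : ℤ)
        = (stp k (t : ℕ) : ℤ) - (stp k' (t' : ℕ) : ℤ) := by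
    intro t t'
    have h1 : (k : ℤ) ≤ stp k (t : ℕ) := by unfold stp; split <;> omega
    have h2 : (stp k' (t' : ℕ) : ℤ) ≤ k' + 1 := by unfold stp; split <;> omega
    rw [Int.natAbs_of_nonneg (by omega)]
  have hcast : ((∑ t : Fin (n + 2), ∑ t' : Fin (n + 2),
      ((stp k (t : ℕ) : ℤ) - (stp k' (t' : ℕ) : ℤ)).natAbs : ℕ) : ℤ)
      = ∑ t : Fin (n + 2), ∑ t' : Fin (n + 2),
        ((stp k (t : ℕ) : ℤ) - (stp k' (t' : ℕ) : ℤ)) := by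
    rw [Nat.cast_sum]
    refine Finset.sum_congr rfl fun t _ => ?_
    rw [Nat.cast_sum]
    exact Finset.sum_congr rfl fun t' _ => key t t'
  have inner : ∀ t : Fin (n + 2), ∑ t' : Fin (n + 2),
        ((stp k (t : ℕ) : ℤ) - (stp k' (t' : ℕ) : ℤ))
      = (n + 2) * (stp k (t : ℕ) : ℤ) - ((n + 2) * k' + (n + 1) - k') := by
    intro t
    rw [Finset.sum_sub_distrib, sum_stp n k' hk']
    simp only [Finset.sum_const, Finset.card_univ, Fintype.card_fin, nsmul_eq_mul]
    push_cast
    ring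
  have expand : ∑ t : Fin (n + 2), ∑ t' : Fin (n + 2),
        ((stp k (t : ℕ) : ℤ) - (stp k' (t' : ℕ) : ℤ))
      = (n + 2) * ((n + 2) * k + (n + 1) - k) - (n + 2) * ((n + 2) * k' + (n + 1) - k') := by
    rw [Finset.sum_congr rfl (fun t _ => inner t), Finset.sum_sub_distrib, ← Finset.mul_sum,
      sum_stp n k hk]
    simp only [Finset.sum_const, Finset.card_univ, Fintype.card_fin, nsmul_eq_mul]
    push_cast
    ring
  have goal_cast : (((n + 2) * (n + 1) * (k - k') : ℕ) : ℤ)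
      = (n + 2) * (n + 1) * ((k : ℤ) - k') := by
    push_cast [Nat.cast_sub hlt.le]
    ring
  have final : ((∑ t : Fin (n + 2), ∑ t' : Fin (n + 2),
      ((stp k (t : ℕ) : ℤ) - (stp k' (t' : ℕ) : ℤ)).natAbs : ℕ) : ℤ)
      = (((n + 2) * (n + 1) * (k - k') : ℕ) : ℤ) := by
    rw [hcast, expand, goal_cast]
    ring
  exact_mod_cast final

noncomputable def w (n : ℕ) : ℝ≥0∞ := ∏ i ∈ Finset.range n, ((i : ℝ≥0∞) + 2)⁻¹

lemma w_succ (n : ℕ) : w (n + 1) = w n * ((n : ℝ≥0∞) + 2)⁻¹ := Finset.prod_range_succ _ n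

lemma w_le_one (n : ℕ) : w n ≤ 1 := by
  refine Finset.prod_le_one (fun i _ => zero_le) (fun i _ => ?_)
  rw [ENNReal.inv_le_one]
  calc (1 : ℝ≥0∞) ≤ 2 := one_le_two
  _ ≤ (i : ℝ≥0∞) + 2 := le_add_self

lemma w_ne_top (n : ℕ) : w n ≠ ⊤ := (lt_of_le_of_lt (w_le_one n) ENNReal.one_lt_top).ne

def badp (N n : ℕ) (c c' : Pre n) : Prop :=
  ∀ m, N < m → m ≤ n → kv (extp c) m ≠ kv (extp c') m

open scoped Classical in
noncomputable def badSet (N n : ℕ) : Finset (Pre n × Pre n) :=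
  Finset.univ.filter (fun p => badp N n p.1 p.2)

lemma mem_badSet {N n : ℕ} {p : Pre n × Pre n} :
    p ∈ badSet N n ↔ badp N n p.1 p.2 := by
  simp [badSet]

noncomputable def e (N n : ℕ) : ℝ≥0∞ :=
  ∑ p ∈ badSet N n, w n * w n *
    (((kv (extp p.1) n : ℤ) - (kv (extp p.2) n : ℤ)).natAbs : ℝ≥0∞)

def badE (N n : ℕ) : Set (EulerPath × EulerPath) :=
  {p | ∀ m, N < m → m ≤ n → D m p ≠ 0}

lemma D_ne_zero_iff {m : ℕ} {p : EulerPath × EulerPath} :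
    D m p ≠ 0 ↔ kv p.1 m ≠ kv p.2 m := by
  unfold D
  rw [abs_ne_zero, sub_ne_zero]
  constructor
  · intro h hk; exact h (by exact_mod_cast hk)
  · intro h hk; exact h (by exact_mod_cast hk)

lemma measure_badE_le (η : Measure EulerPath) (hη : IsSymmetricMeasure η) (N n : ℕ) :
    (η.prod η) (badE N n) ≤ ∑ p ∈ badSet N n, w n * w n := by
  haveI : IsProbabilityMeasure η := hη.1
  have hsub : badE N n ⊆ ⋃ p ∈ badSet N n, cyl p.1 ×ˢ cyl p.2 := by
    intro q hq
    refine Set.mem_iUnion₂.mpr ⟨(res n q.1, res n q.2), ?_, ?_⟩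
    · rw [mem_badSet]
      intro m hNm hmn
      rw [kv_extp_res hmn, kv_extp_res hmn]
      exact D_ne_zero_iff.mp (hq m hNm hmn)
    · exact ⟨mem_cyl_res n q.1, mem_cyl_res n q.2⟩
  refine (measure_mono hsub).trans ?_
  refine (measure_biUnion_finset_le _ _).trans ?_
  refine Finset.sum_le_sum fun p _ => ?_
  rw [Measure.prod_prod, show η (cyl p.1) = w n from hη.2 n (extp p.1),
    show η (cyl p.2) = w n from hη.2 n (extp p.2)]

lemma sum_natAbs_step' (n k k' : ℕ) (hk : k ≤ n + 1) (hk' : k' ≤ n + 1) (hne : k ≠ k') :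
    ∑ t : Fin (n + 2), ∑ t' : Fin (n + 2),
        ((stp k (t : ℕ) : ℤ) - (stp k' (t' : ℕ) : ℤ)).natAbs
      = (n + 2) * (n + 1) * ((k : ℤ) - (k' : ℤ)).natAbs := by
  rcases lt_or_gt_of_ne hne with h | h
  · have hsw : ∀ t t' : Fin (n + 2), ((stp k (t : ℕ) : ℤ) - (stp k' (t' : ℕ) : ℤ)).natAbs
        = ((stp k' (t' : ℕ) : ℤ) - (stp k (t : ℕ) : ℤ)).natAbs := by
      intro t t'; rw [← Int.natAbs_neg, neg_sub]
    rw [Finset.sum_congr rfl fun t _ => Finset.sum_congr rfl fun t' _ => hsw t t',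
      Finset.sum_comm, sum_natAbs_step n k' k hk' hk h]
    congr 1
    omega
  · rw [sum_natAbs_step n k k' hk hk' h]
    congr 1
    omega

lemma e_step (N n : ℕ) (hNn : N < n) :
    e N (n + 1) ≤ ((n : ℝ≥0∞) + 1) * ((n : ℝ≥0∞) + 2)⁻¹ * e N n := by
  classical
  set α : Fin (n + 1) → Type := fun i => Fin (i.1 + 2) with hα
  set F : Pre (n + 1) × Pre (n + 1) → ℝ≥0∞ := fun P =>
    if badp N (n + 1) P.1 P.2 then
      w (n + 1) * w (n + 1) *
        (((kv (extp P.1) (n + 1) : ℤ) - (kv (extp P.2) (n + 1) : ℤ)).natAbs : ℝ≥0∞)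
    else 0 with hF
  have he : e N (n + 1) = ∑ P : Pre (n + 1) × Pre (n + 1), F P := by
    rw [e, badSet, Finset.sum_filter]
  set EQ : ((Pre n × Pre n) × (Fin (n + 2) × Fin (n + 2))) ≃ (Pre (n + 1) × Pre (n + 1)) :=
    ((Equiv.prodComm _ _).trans (Equiv.prodProdProdComm (Fin (n+2)) (Pre n) (Fin (n+2)) (Pre n)).symm).trans
      ((Fin.snocEquiv α).prodCongr (Fin.snocEquiv α)) with hEQ
  have hEQval : ∀ (c c' : Pre n) (t t' : Fin (n + 2)),
      EQ ((c, c'), (t, t')) = (snoc2 c t, snoc2 c' t') := fun _ _ _ _ => rfl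
  have hsum : e N (n + 1) = ∑ cc : Pre n × Pre n, ∑ tt : Fin (n + 2) × Fin (n + 2),
      F (EQ (cc, tt)) := by
    rw [he, ← Fintype.sum_equiv EQ (fun q => F (EQ q)) F (fun q => rfl),
      Fintype.sum_prod_type]
  rw [hsum]
  have inner : ∀ cc : Pre n × Pre n,
      ∑ tt : Fin (n + 2) × Fin (n + 2), F (EQ (cc, tt))
        ≤ if badp N n cc.1 cc.2 then
            ((n : ℝ≥0∞) + 1) * ((n : ℝ≥0∞) + 2)⁻¹ *
              (w n * w n *
                (((kv (extp cc.1) n : ℤ) - (kv (extp cc.2) n : ℤ)).natAbs : ℝ≥0∞))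
          else 0 := by
    rintro ⟨c, c'⟩
    by_cases hb : badp N n c c'
    · simp only [hb, if_true]
      set k := kv (extp c) n with hk
      set k' := kv (extp c') n with hk'
      have hkle : k ≤ n := kv_le _ n
      have hkle' : k' ≤ n := kv_le _ n
      have hne : k ≠ k' := hb n hNn le_rfl
      have hterm : ∀ tt : Fin (n + 2) × Fin (n + 2), F (EQ ((c, c'), tt))
          ≤ w (n + 1) * w (n + 1) *
            (((stp k (tt.1 : ℕ) : ℤ) - (stp k' (tt.2 : ℕ) : ℤ)).natAbs : ℝ≥0∞) := by
        rintro ⟨t, t'⟩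
        rw [hEQval]
        simp only [hF]
        have h1 : kv (extp (snoc2 c t)) (n + 1) = stp k (t : ℕ) := by
          rw [kv_extp_snoc2_succ, ← hk]; rfl
        have h2 : kv (extp (snoc2 c' t')) (n + 1) = stp k' (t' : ℕ) := by
          rw [kv_extp_snoc2_succ, ← hk']; rfl
        split
        · rw [h1, h2]
        · exact zero_le
      refine (Finset.sum_le_sum fun tt _ => hterm tt).trans ?_
    -- now an exact computation
      rw [← Finset.mul_sum]
      have hcast : ∑ tt : Fin (n + 2) × Fin (n + 2),
          (((stp k (tt.1 : ℕ) : ℤ) - (stp k' (tt.2 : ℕ) : ℤ)).natAbs : ℝ≥0∞)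
          = (((n + 2) * (n + 1) * ((k : ℤ) - (k' : ℤ)).natAbs : ℕ) : ℝ≥0∞) := by
        rw [Fintype.sum_prod_type, ← sum_natAbs_step' n k k' (by omega) (by omega) hne]
        push_cast
        rfl
      rw [hcast]
      have hw : w (n + 1) * w (n + 1) * (((n + 2) * (n + 1) * ((k : ℤ) - (k' : ℤ)).natAbs : ℕ) : ℝ≥0∞)
          = ((n : ℝ≥0∞) + 1) * ((n : ℝ≥0∞) + 2)⁻¹ *
            (w n * w n * ((((k : ℤ) - (k' : ℤ)).natAbs : ℕ) : ℝ≥0∞)) := by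
        rw [w_succ]
        push_cast
        have hinv : ((n : ℝ≥0∞) + 2)⁻¹ * ((n : ℝ≥0∞) + 2) = 1 :=
          ENNReal.inv_mul_cancel (by intro h; rw [add_eq_zero] at h; exact two_ne_zero h.2) (by
            exact (ENNReal.add_lt_top.mpr ⟨ENNReal.natCast_lt_top n, by norm_num⟩).ne)
        calc w n * ((n : ℝ≥0∞) + 2)⁻¹ * (w n * ((n : ℝ≥0∞) + 2)⁻¹) *
              (((n : ℝ≥0∞) + 2) * ((n : ℝ≥0∞) + 1) * ((((k : ℤ) - (k' : ℤ)).natAbs : ℕ) : ℝ≥0∞))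
            = (((n : ℝ≥0∞) + 2)⁻¹ * ((n : ℝ≥0∞) + 2)) * (((n : ℝ≥0∞) + 1) * ((n : ℝ≥0∞) + 2)⁻¹ *
              (w n * w n * ((((k : ℤ) - (k' : ℤ)).natAbs : ℕ) : ℝ≥0∞))) := by ring
          _ = _ := by rw [hinv, one_mul]
      rw [hw]
    · simp only [hb, if_false]
      refine le_of_eq (Finset.sum_eq_zero fun tt _ => ?_)
      rcases tt with ⟨t, t'⟩
      rw [hEQval]
      simp only [hF]
      rw [if_neg]
      intro hbad
      exact hb fun m hNm hmn => by
        have := hbad m hNm (hmn.trans (Nat.le_succ n))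
        rwa [kv_extp_snoc2 hmn, kv_extp_snoc2 hmn] at this
  refine (Finset.sum_le_sum fun cc _ => inner cc).trans ?_
  rw [e, badSet, Finset.sum_filter, Finset.mul_sum]
  refine le_of_eq (Finset.sum_congr rfl fun cc _ => ?_)
  split <;> simp

lemma sum_ww_le_e (N n : ℕ) (hNn : N < n) :
    ∑ p ∈ badSet N n, w n * w n ≤ e N n := by
  refine Finset.sum_le_sum fun p hp => ?_
  rw [mem_badSet] at hp
  have hne : kv (extp p.1) n ≠ kv (extp p.2) n := hp n hNn le_rfl
  have h1 : (1 : ℝ≥0∞) ≤ (((kv (extp p.1) n : ℤ) - (kv (extp p.2) n : ℤ)).natAbs : ℝ≥0∞) := by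
    have h0 : ((kv (extp p.1) n : ℤ) - (kv (extp p.2) n : ℤ)).natAbs ≠ 0 := by omega
    exact_mod_cast Nat.one_le_iff_ne_zero.mpr h0
  calc w n * w n = w n * w n * 1 := (mul_one _).symm
  _ ≤ _ := mul_le_mul_right h1 _

lemma e_ne_top (N n : ℕ) : e N n ≠ ⊤ := by
  rw [e]
  refine (ENNReal.sum_lt_top.mpr fun p _ => ?_).ne
  have h1 : w n * w n ≤ 1 := mul_le_one' (w_le_one n) (w_le_one n)
  calc w n * w n * _ ≤ 1 * (((kv (extp p.1) n : ℤ) - (kv (extp p.2) n : ℤ)).natAbs : ℝ≥0∞) :=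
        mul_le_mul_left h1 _
  _ < ⊤ := by rw [one_mul]; exact ENNReal.natCast_lt_top _

lemma e_decay (N n : ℕ) (h : N + 1 ≤ n) :
    e N n * ((n : ℝ≥0∞) + 1) ≤ e N (N + 1) * ((N : ℝ≥0∞) + 2) := by
  induction n, h using Nat.le_induction with
  | base => refine le_of_eq ?_; congr 1; push_cast; ring
  | succ n hn ih =>
      have hinv : ((n : ℝ≥0∞) + 2)⁻¹ * ((n : ℝ≥0∞) + 2) = 1 :=
        ENNReal.inv_mul_cancel (by intro hc; rw [add_eq_zero] at hc; exact two_ne_zero hc.2)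
          (by exact (ENNReal.add_lt_top.mpr ⟨ENNReal.natCast_lt_top n, by norm_num⟩).ne)
      have step := e_step N n (by omega)
      calc e N (n + 1) * (((n + 1 : ℕ) : ℝ≥0∞) + 1)
          ≤ (((n : ℝ≥0∞) + 1) * ((n : ℝ≥0∞) + 2)⁻¹ * e N n) * (((n + 1 : ℕ) : ℝ≥0∞) + 1) :=
            mul_le_mul_left step _
        _ = e N n * ((n : ℝ≥0∞) + 1) * (((n : ℝ≥0∞) + 2)⁻¹ * ((n : ℝ≥0∞) + 2)) := by
            push_cast; ring
        _ = e N n * ((n : ℝ≥0∞) + 1) := by rw [hinv, mul_one]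
        _ ≤ _ := ih

def binf (N : ℕ) : Set (EulerPath × EulerPath) := {p | ∀ n, N < n → D n p ≠ 0}

lemma measure_binf (η : Measure EulerPath) (hη : IsSymmetricMeasure η) (N : ℕ) :
    (η.prod η) (binf N) = 0 := by
  haveI : IsProbabilityMeasure η := hη.1
  set ρ := η.prod η with hρ
  haveI : IsProbabilityMeasure ρ := by
    rw [hρ]; infer_instance
  set C := e N (N + 1) * ((N : ℝ≥0∞) + 2) with hC
  have hCt : C ≠ ⊤ := ENNReal.mul_ne_top (e_ne_top N (N + 1))
    (by exact (ENNReal.add_lt_top.mpr ⟨ENNReal.natCast_lt_top N, by norm_num⟩).ne)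
  have key : ∀ n, N + 1 ≤ n → ρ (binf N) * ((n : ℝ≥0∞) + 1) ≤ C := by
    intro n hn
    have hsub : binf N ⊆ badE N n := fun p hp m hNm _ => hp m hNm
    have h1 : ρ (binf N) ≤ e N n :=
      (measure_mono hsub).trans ((measure_badE_le η hη N n).trans (sum_ww_le_e N n (by omega)))
    exact (mul_le_mul_left h1 _).trans (e_decay N n hn)
  by_contra hne
  have hρtop : ρ (binf N) ≠ ⊤ := (measure_lt_top ρ _).ne
  obtain ⟨n, hn⟩ := ENNReal.exists_nat_gt (ENNReal.div_lt_top hCt hne).ne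
  have hlt : C < ρ (binf N) * n := by
    rw [mul_comm]
    exact (ENNReal.div_lt_iff (Or.inl hne) (Or.inl hρtop)).mp hn
  set m := max n (N + 1) with hm
  have : ρ (binf N) * ((m : ℝ≥0∞) + 1) ≤ C := key m (le_max_right _ _)
  have hmono : ρ (binf N) * (n : ℝ≥0∞) ≤ ρ (binf N) * ((m : ℝ≥0∞) + 1) := by
    refine mul_le_mul_right ?_ _
    have : (n : ℝ≥0∞) ≤ (m : ℝ≥0∞) := by exact_mod_cast Nat.cast_le.mpr (le_max_left _ _)
    exact this.trans le_self_add
  exact absurd (hlt.trans_le (hmono.trans this)) (lt_irrefl _)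

/-- For every integer `M ≥ 1`, `ρ`-almost every pair of paths (`ρ = η × η`) has, beyond
every level `N`, some level `n > N` at which the vertex distance `D_n` is `0` or `M`;
in particular the stopping time `τ = inf {n > σ : D_n ∈ {0,M}}` is finite `ρ`-a.e. for
any a.e.-finite stopping time `σ`. -/
theorem euler_distance_hits_zero_or_M
    (η : Measure EulerPath) (hη : IsSymmetricMeasure η) (M : ℕ) (hM : 1 ≤ M) :
    ∀ᵐ p ∂(η.prod η), ∀ N : ℕ, ∃ n, N < n ∧ (D n p = 0 ∨ D n p = (M : ℤ)) := by
  rw [MeasureTheory.ae_all_iff]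
  intro N
  refine MeasureTheory.ae_iff.mpr (measure_mono_null ?_ (measure_binf η hη N))
  intro p hp
  intro n hn hD0
  exact hp ⟨n, hn, Or.inl hD0⟩
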